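/- The map φ taking a metric d on a finite set A to the Σ-proximity φ(d)(x,y) = d(x,·) + d(y,·) − d(x,y) − d(·,·) + Σ/n is a bijection between the set of metrics on A and the set of Σ-proximities on A, with inverse ψ(σ)(x,y) = (σ(x,x)+σ(y,y))/2 − σ(x,y). -/

import Mathlib

open Finset

/-- A metric in the sense of the paper: `d x y = 0` iff `x = y`, and
the triangle inequality `d x y + d x z - d y z ≥ 0`. -/
def IsPaperMetric {A : Type*} (d : A → A → ℝ) : Prop :=
  (∀ x y, d x y = 0 ↔ x = y) ∧ (∀ x y z, 0 ≤ d x y + d x z - d y z)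

/-- A Σ-proximity on a finite set: normalization and the (σ-)triangle
inequality, strict when `z = y` and `x ≠ y`. -/
def IsSigmaProx {A : Type*} [Fintype A] (S : ℝ) (σ : A → A → ℝ) : Prop :=
  (∀ x, ∑ t, σ x t = S) ∧
  (∀ x y z, σ x y + σ x z - σ y z ≤ σ x x) ∧
  (∀ x y, x ≠ y → σ x y + σ x y - σ y y < σ x x)

/-- `d(x,·)`: the average distance from `x`. -/
noncomputable def dRow {A : Type*} [Fintype A] (d : A → A → ℝ) (x : A) : ℝ :=
  (∑ t, d x t) / (Fintype.card A : ℝ)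

/-- `d(·,·)`: the overall average distance. -/
noncomputable def dAvg {A : Type*} [Fintype A] (d : A → A → ℝ) : ℝ :=
  (∑ s, ∑ t, d s t) / (Fintype.card A : ℝ) ^ 2

/-- The transformation φ from metrics to Σ-proximities. -/
noncomputable def phi {A : Type*} [Fintype A] (S : ℝ) (d : A → A → ℝ) : A → A → ℝ :=
  fun x y => dRow d x + dRow d y - d x y - dAvg d + S / (Fintype.card A : ℝ)

/-- The transformation ψ from Σ-proximities to metrics. -/
noncomputable def psi {A : Type*} (σ : A → A → ℝ) : A → A → ℝ :=
  fun x y => (σ x x + σ y y) / 2 - σ x y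

theorem phi_bijOn {A : Type*} [Fintype A] [Nonempty A] (S : ℝ) :
    Set.BijOn (phi S) {d : A → A → ℝ | IsPaperMetric d}
      {σ : A → A → ℝ | IsSigmaProx S σ} ∧
    Set.InvOn psi (phi S) {d : A → A → ℝ | IsPaperMetric d}
      {σ : A → A → ℝ | IsSigmaProx S σ} := by
  have hcard : (0 : ℝ) < (Fintype.card A : ℝ) := by
    exact_mod_cast Fintype.card_pos
  have hn0 : (Fintype.card A : ℝ) ≠ 0 := ne_of_gt hcard
  -- nonnegativity of metrics
  have dnonneg : ∀ d : A → A → ℝ, IsPaperMetric d → ∀ x y, 0 ≤ d x y := by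
    intro d hd x y
    have h1 := hd.2 x y y
    have h2 : d y y = 0 := (hd.1 y y).mpr rfl
    linarith
  -- φ maps metrics to Σ-proximities
  have hmaps : ∀ d : A → A → ℝ, IsPaperMetric d → IsSigmaProx S (phi S d) := by
    intro d hd
    refine ⟨?_, ?_, ?_⟩
    · intro x
      have hrowsum : ∑ t : A, dRow d t = (Fintype.card A : ℝ) * dAvg d := by
        unfold dRow dAvg
        rw [← Finset.sum_div]
        field_simp
      have hrow : ∑ t : A, d x t = (Fintype.card A : ℝ) * dRow d x := by
        unfold dRow; field_simp
      simp only [phi]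
      rw [Finset.sum_add_distrib, Finset.sum_sub_distrib, Finset.sum_sub_distrib,
        Finset.sum_add_distrib, Finset.sum_const, Finset.sum_const, Finset.sum_const,
        Finset.card_univ, nsmul_eq_mul, nsmul_eq_mul, nsmul_eq_mul, hrowsum, hrow]
      field_simp
      ring
    · intro x y z
      have hxx : d x x = 0 := (hd.1 x x).mpr rfl
      have := hd.2 x y z
      simp only [phi]
      linarith
    · intro x y hxy
      have hxx : d x x = 0 := (hd.1 x x).mpr rfl
      have hyy : d y y = 0 := (hd.1 y y).mpr rfl
      have hpos : 0 < d x y := by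
        rcases lt_or_eq_of_le (dnonneg d hd x y) with h | h
        · exact h
        · exact absurd ((hd.1 x y).mp h.symm) hxy
      simp only [phi]
      linarith
  -- ψ maps Σ-proximities to metrics
  have hpsimaps : ∀ σ : A → A → ℝ, IsSigmaProx S σ → IsPaperMetric (psi σ) := by
    intro σ hσ
    constructor
    · intro x y
      constructor
      · intro h
        by_contra hxy
        have := hσ.2.2 x y hxy
        simp only [psi] at h
        linarith
      · rintro rfl
        simp [psi]
    · intro x y z
      have := hσ.2.1 x y z
      simp only [psi]
      linarith
  -- left inverse
  have hleft : Set.LeftInvOn psi (phi S) {d : A → A → ℝ | IsPaperMetric d} := by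
    intro d hd
    have hd' : IsPaperMetric d := hd
    funext x y
    have hxx : d x x = 0 := (hd'.1 x x).mpr rfl
    have hyy : d y y = 0 := (hd'.1 y y).mpr rfl
    simp only [psi, phi, hxx, hyy]
    ring
  -- right inverse
  have hright : Set.RightInvOn psi (phi S) {σ : A → A → ℝ | IsSigmaProx S σ} := by
    intro σ hσ
    have hσ' : IsSigmaProx S σ := hσ
    set n : ℝ := (Fintype.card A : ℝ) with hn
    set T : ℝ := ∑ t : A, σ t t with hT
    have hrowsum : ∀ x, ∑ t : A, psi σ x t = (n * σ x x + T) / 2 - S := by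
      intro x
      simp only [psi]
      rw [Finset.sum_sub_distrib, hσ'.1 x, ← Finset.sum_div, Finset.sum_add_distrib,
        Finset.sum_const, Finset.card_univ, nsmul_eq_mul]
    have hrow : ∀ x, dRow (psi σ) x = ((n * σ x x + T) / 2 - S) / n := by
      intro x; unfold dRow; rw [hrowsum x]
    have havg : dAvg (psi σ) = (T - S) / n := by
      unfold dAvg
      have : ∑ s : A, ∑ t : A, psi σ s t = ∑ s : A, ((n * σ s s + T) / 2 - S) := by
        exact Finset.sum_congr rfl fun s _ => hrowsum s
      rw [this, Finset.sum_sub_distrib, ← Finset.sum_div, Finset.sum_add_distrib,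
        ← Finset.mul_sum, Finset.sum_const, Finset.sum_const, Finset.card_univ,
        nsmul_eq_mul, nsmul_eq_mul, ← hT]
      field_simp
      ring
    funext x y
    simp only [phi, hrow, havg, psi]
    field_simp
    ring
  refine ⟨⟨fun d hd => hmaps d hd, ?_, ?_⟩, hleft, hright⟩
  · exact hleft.injOn
  · intro σ hσ
    exact ⟨psi σ, hpsimaps σ hσ, hright hσ⟩
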